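/- Let f be a nonnegative, radially decreasing C¹ function on ℝ^d and let α ∈ (0, d). Then for any ε₀ ∈ (0, 1/4] and all r > 0, −∂_r(|·|^{−α} * f)(r) ≳_{d,α,ε₀} [f((2/3)r) − f(r/(2ε₀))] r^{d−1−α}, with the implied constant uniformly bounded for (α, ε₀) in compact subsets of (0, d) × (0, 1/4]. In particular, if f vanishes at infinity and is not identically zero, then |·|^{−α} * f is strictly radially decreasing. -/

import Mathlib

set_option linter.unusedSectionVars false
set_option linter.unusedVariables false
set_option maxHeartbeats 1000000

open MeasureTheory Metric Set Filter ENNReal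
open scoped RealInnerProductSpace Topology
noncomputable section

abbrev Euc (d : ℕ) := EuclideanSpace ℝ (Fin d)

def rieszConv (d : ℕ) (α : ℝ) (f : Euc d → ℝ) (x : Euc d) : ℝ :=
  ∫ y : Euc d, ‖x - y‖ ^ (-α) * f y

namespace S6

variable {d : ℕ}

def Tm (e : Euc d) (m : ℝ) (y : Euc d) : Euc d :=
  (2*m) • e + Submodule.reflection (ℝ ∙ e)ᗮ y

variable {e : Euc d} (he : ‖e‖ = 1) {m : ℝ}

lemma refl_smul (s : ℝ) : Submodule.reflection (ℝ ∙ e)ᗮ (s • e) = -(s • e) :=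
  Submodule.reflection_mem_subspace_orthogonal_precomplement_eq_neg
    (Submodule.mem_span_singleton.2 ⟨s, rfl⟩)

lemma inner_refl (y : Euc d) : ⟪Submodule.reflection (ℝ ∙ e)ᗮ y, e⟫ = -⟪y, e⟫ := by
  have h1 : Submodule.reflection (ℝ ∙ e)ᗮ e = -e := by simpa using refl_smul (e := e) 1
  calc ⟪Submodule.reflection (ℝ ∙ e)ᗮ y, e⟫ = -⟪Submodule.reflection (ℝ ∙ e)ᗮ y, Submodule.reflection (ℝ ∙ e)ᗮ e⟫ := by
        rw [h1, inner_neg_right]; ring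
    _ = -⟪y, e⟫ := by rw [LinearIsometryEquiv.inner_map_map]

include he

lemma Tm_inner (y : Euc d) : ⟪Tm e m y, e⟫ = 2*m - ⟪y, e⟫ := by
  have : ⟪e, e⟫ = (1:ℝ) := by
    rw [real_inner_self_eq_norm_sq, he]; norm_num
  rw [Tm, inner_add_left, real_inner_smul_left, inner_refl, this]
  ring

omit he in
lemma Tm_dist (s : ℝ) (y : Euc d) : ‖s • e - Tm e m y‖ = ‖(2*m - s) • e - y‖ := by
  have : s • e - Tm e m y = Submodule.reflection (ℝ ∙ e)ᗮ ((2*m - s) • e - y) := by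
    rw [map_sub, refl_smul]
    simp [Tm, sub_smul]
    abel
  rw [this, LinearIsometryEquiv.norm_map]

lemma Tm_norm_sq (y : Euc d) :
    ‖Tm e m y‖^2 = ‖y‖^2 + 4*m*(m - ⟪y, e⟫) := by
  have h := norm_add_sq_real ((2*m) • e) (Submodule.reflection (ℝ ∙ e)ᗮ y)
  have h2 : ⟪(2*m) • e, Submodule.reflection (ℝ ∙ e)ᗮ y⟫ = (2*m) * (-⟪y,e⟫) := by
    rw [inner_smul_left, real_inner_comm, inner_refl]; norm_num
  have h3 : ‖(2*m) • e‖^2 = (2*m)^2 := by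
    rw [norm_smul, he]; simp [mul_pow, sq_abs]
  rw [Tm, h, h2, h3, LinearIsometryEquiv.norm_map]
  ring

lemma Tm_norm_ge (y : Euc d) (hm : 0 ≤ m) (hy : ⟪y, e⟫ ≤ m) : ‖y‖ ≤ ‖Tm e m y‖ := by
  have h := Tm_norm_sq he (m := m) y
  nlinarith [norm_nonneg (Tm e m y), norm_nonneg y]

lemma Tm_norm_ge' (y : Euc d) : 2*m - ⟪y, e⟫ ≤ ‖Tm e m y‖ := by
  have := real_inner_le_norm (Tm e m y) e
  rw [Tm_inner he, he, mul_one] at this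
  linarith

omit he in
lemma Tm_measurePreserving : MeasurePreserving (Tm e m) (volume : Measure (Euc d)) volume := by
  have h1 : MeasurePreserving (fun z : Euc d => (2*m) • e + z) volume volume :=
    measurePreserving_add_left volume _
  have h2 : MeasurePreserving (Submodule.reflection (ℝ ∙ e)ᗮ : Euc d → Euc d) volume volume :=
    (Submodule.reflection (ℝ ∙ e)ᗮ).measurePreserving
  exact h1.comp h2

omit he in
lemma Tm_measurableEmbedding : MeasurableEmbedding (Tm e m : Euc d → Euc d) := by
  have h1 : MeasurableEmbedding (fun z : Euc d => (2*m) • e + z) :=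
    (Homeomorph.addLeft ((2*m) • e)).measurableEmbedding
  have h2 : MeasurableEmbedding (Submodule.reflection (ℝ ∙ e)ᗮ : Euc d → Euc d) :=
    (Submodule.reflection (ℝ ∙ e)ᗮ).toHomeomorph.measurableEmbedding
  exact h1.comp h2

lemma inner_ee : ⟪e, e⟫ = (1:ℝ) := by
  rw [real_inner_self_eq_norm_sq, he]; norm_num

lemma hyperplane_null : volume {y : Euc d | ⟪y, e⟫ = m} = 0 := by
  have h0 : volume (((ℝ ∙ e)ᗮ : Submodule ℝ (Euc d)) : Set (Euc d)) = 0 := by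
    apply Measure.addHaar_submodule
    intro htop
    have : e ∈ (ℝ ∙ e)ᗮ := htop ▸ Submodule.mem_top
    have := (Submodule.mem_orthogonal_singleton_iff_inner_right.1 this)
    rw [inner_ee he] at this
    norm_num at this
  have hset : {y : Euc d | ⟪y, e⟫ = m} =
      (fun y : Euc d => y + (-(m • e))) ⁻¹' (((ℝ ∙ e)ᗮ : Submodule ℝ (Euc d)) : Set (Euc d)) := by
    ext y
    simp only [mem_setOf_eq, mem_preimage, SetLike.mem_coe,
      Submodule.mem_orthogonal_singleton_iff_inner_right]
    rw [inner_add_right, inner_neg_right, real_inner_comm y e, real_inner_smul_right, inner_ee he]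
    constructor <;> intro h <;> linarith
  rw [hset, measure_preimage_add_right]
  exact h0

omit he in
lemma measurableSet_H : MeasurableSet {y : Euc d | ⟪y, e⟫ < m} := by
  have : Continuous fun y : Euc d => ⟪y, e⟫ := continuous_id.inner continuous_const
  exact (isOpen_lt this continuous_const).measurableSet

lemma norm_se_sq (s : ℝ) (y : Euc d) :
    ‖s • e - y‖^2 = s^2 - 2*s*⟪y,e⟫ + ‖y‖^2 := by
  have h := norm_sub_sq_real (s • e) y
  have h2 : ⟪s • e, y⟫ = s * ⟪y, e⟫ := by
    rw [real_inner_smul_left, real_inner_comm]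
  have h3 : ‖s • e‖^2 = s^2 := by rw [norm_smul, he]; simp [mul_pow, sq_abs]
  rw [h, h2, h3]; ring

-- kernel comparison on the half space
lemma kernel_mono {α r t : ℝ} (hα : 0 < α) (hrt : r < t) {y : Euc d}
    (hy : ⟪y, e⟫ < (r+t)/2) (hne : y ≠ r • e) :
    ‖t • e - y‖ ^ (-α) ≤ ‖r • e - y‖ ^ (-α) := by
  have ha : 0 < ‖r • e - y‖ := by
    rw [norm_pos_iff, sub_ne_zero]
    exact fun h => hne (by rw [h])
  have hb : ‖r • e - y‖ ≤ ‖t • e - y‖ := by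
    have h1 := norm_se_sq he r y
    have h2 := norm_se_sq he t y
    nlinarith [norm_nonneg (r • e - y), norm_nonneg (t • e - y)]
  exact Real.rpow_le_rpow_of_nonpos ha hb (by linarith)

variable {α : ℝ} {f : Euc d → ℝ} {g : ℝ → ℝ} {r t : ℝ}

/-- The fundamental reflection identity. -/
lemma diff_eq (hα : 0 < α)
    (hint : ∀ x : Euc d, Integrable (fun y : Euc d => ‖x - y‖ ^ (-α) * f y)
      (volume : Measure (Euc d)))
    (hrt : r < t) :
    rieszConv d α f (r • e) - rieszConv d α f (t • e) =
      ∫ y in {y : Euc d | ⟪y, e⟫ < (r+t)/2},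
        (‖r • e - y‖ ^ (-α) - ‖t • e - y‖ ^ (-α)) * (f y - f (Tm e ((r+t)/2) y)) := by
  set m : ℝ := (r+t)/2 with hm
  set T : Euc d → Euc d := Tm e m with hTdef
  set H : Set (Euc d) := {y : Euc d | ⟪y, e⟫ < m} with hH
  have hT := Tm_measurePreserving (d := d) (e := e) (m := m)
  have hTe := Tm_measurableEmbedding (d := d) (e := e) (m := m)
  have hdr : ∀ y, ‖r • e - T y‖ = ‖t • e - y‖ := by
    intro y; rw [hTdef, Tm_dist]; congr 2; rw [hm]; ring
  have hdt : ∀ y, ‖t • e - T y‖ = ‖r • e - y‖ := by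
    intro y; rw [hTdef, Tm_dist]; congr 2; rw [hm]; ring
  set F : Euc d → ℝ := fun y => (‖r • e - y‖ ^ (-α) - ‖t • e - y‖ ^ (-α)) * f y with hF
  have hkr : Integrable (fun y : Euc d => ‖r • e - y‖ ^ (-α) * f y) volume := hint _
  have hkt : Integrable (fun y : Euc d => ‖t • e - y‖ ^ (-α) * f y) volume := hint _
  have hFi : Integrable F volume := by
    have := hkr.sub hkt
    convert this using 1
    ext y; simp only [hF, Pi.sub_apply]; ring
  have hFT : Integrable (F ∘ T) volume := (hT.integrable_comp_emb hTe).2 hFi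
  have step1 : rieszConv d α f (r • e) - rieszConv d α f (t • e) = ∫ y, F y := by
    rw [rieszConv, rieszConv, ← integral_sub hkr hkt]
    congr 1; ext y; simp only [hF]; ring
  have hHm : MeasurableSet H := measurableSet_H
  have step2 : ∫ y, F y = (∫ y in H, F y) + ∫ y in Hᶜ, F y :=
    (integral_add_compl hHm hFi).symm
  have hcompl : Hᶜ =ᵐ[volume] {y : Euc d | m < ⟪y, e⟫} := by
    have hnull : volume {y : Euc d | ⟪y, e⟫ = m} = 0 := hyperplane_null he
    refine Filter.eventuallyEq_set.2 ?_
    have : ∀ᵐ y : Euc d ∂volume, ⟪y, e⟫ ≠ m := by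
      rw [ae_iff]
      convert hnull using 2
      ext y; simp
    filter_upwards [this] with y hy
    change (¬ (⟪y,e⟫ < m)) ↔ (m < ⟪y,e⟫)
    rw [not_lt]
    exact ⟨fun h => lt_of_le_of_ne h (Ne.symm hy), le_of_lt⟩
  have step3 : ∫ y in Hᶜ, F y = ∫ y in {y : Euc d | m < ⟪y, e⟫}, F y :=
    setIntegral_congr_set hcompl
  have hpre : T ⁻¹' {y : Euc d | m < ⟪y, e⟫} = H := by
    ext y
    simp only [mem_preimage, mem_setOf_eq, hH, hTdef]
    rw [Tm_inner he]
    constructor <;> intro h <;> linarith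
  have step4 : ∫ y in {y : Euc d | m < ⟪y, e⟫}, F y = ∫ y in H, F (T y) := by
    rw [← hT.setIntegral_preimage_emb hTe F _, hpre]
  have hFTint : IntegrableOn (fun y => F (T y)) H volume := hFT.integrableOn
  have hFint : IntegrableOn F H volume := hFi.integrableOn
  have step5 : (∫ y in H, F y) + ∫ y in H, F (T y) =
      ∫ y in H, (‖r • e - y‖ ^ (-α) - ‖t • e - y‖ ^ (-α)) * (f y - f (T y)) := by
    rw [← integral_add hFint hFTint]
    apply setIntegral_congr_fun hHm
    intro y _
    simp only [hF]
    rw [hdr y, hdt y]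
    ring
  rw [step1, step2, step3, step4, step5]

omit he in
lemma W_integrable
    (hint : ∀ x : Euc d, Integrable (fun y : Euc d => ‖x - y‖ ^ (-α) * f y)
      (volume : Measure (Euc d))) :
    Integrable (fun y : Euc d =>
      (‖r • e - y‖ ^ (-α) - ‖t • e - y‖ ^ (-α)) * (f y - f (Tm e ((r+t)/2) y))) volume := by
  set m : ℝ := (r+t)/2 with hmdef
  have hkr : Integrable (fun y : Euc d => ‖r • e - y‖ ^ (-α) * f y) volume := hint _
  have hkt : Integrable (fun y : Euc d => ‖t • e - y‖ ^ (-α) * f y) volume := hint _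
  have hT := Tm_measurePreserving (d := d) (e := e) (m := m)
  have hTe := Tm_measurableEmbedding (d := d) (e := e) (m := m)
  have h3 : Integrable ((fun y : Euc d => ‖r • e - y‖ ^ (-α) * f y) ∘ (Tm e m)) volume :=
    (hT.integrable_comp_emb hTe).2 hkr
  have h4 : Integrable ((fun y : Euc d => ‖t • e - y‖ ^ (-α) * f y) ∘ (Tm e m)) volume :=
    (hT.integrable_comp_emb hTe).2 hkt
  have hdr : ∀ y, ‖r • e - Tm e m y‖ = ‖t • e - y‖ := by
    intro y; rw [Tm_dist]; congr 2; rw [hmdef]; ring_nf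
  have hdt : ∀ y, ‖t • e - Tm e m y‖ = ‖r • e - y‖ := by
    intro y; rw [Tm_dist]; congr 2; rw [hmdef]; ring_nf
  have := ((hkr.sub hkt).add (h3.sub h4))
  refine this.congr (Filter.Eventually.of_forall fun y => ?_)
  simp only [Function.comp_apply, Pi.sub_apply, Pi.add_apply]
  rw [hdr y, hdt y]
  ring

omit he in
/-- mean value inequality for x ↦ x^(-α) -/
lemma rpow_neg_sub_ge {a b : ℝ} (hα : 0 < α) (ha : 0 < a) (hab : a ≤ b) :
    α * b^(-α-1) * (b - a) ≤ a^(-α) - b^(-α) := by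
  rcases eq_or_lt_of_le hab with rfl | h
  · simp
  · have hcont : ContinuousOn (fun x : ℝ => x ^ (-α)) (Icc a b) := by
      intro x hx
      exact (Real.continuousAt_rpow_const x (-α)
        (Or.inl (ne_of_gt (lt_of_lt_of_le ha hx.1)))).continuousWithinAt
    have hderiv : ∀ x ∈ Ioo a b, HasDerivAt (fun x : ℝ => x ^ (-α))
        ((-α) * x ^ (-α-1)) x := by
      intro x hx
      exact Real.hasDerivAt_rpow_const (x := x) (p := -α)
        (Or.inl (ne_of_gt (lt_trans ha hx.1)))
    obtain ⟨c, hc, hslope⟩ := exists_hasDerivAt_eq_slope (fun x : ℝ => x ^ (-α))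
      (fun x => (-α) * x ^ (-α-1)) h hcont hderiv
    rw [eq_div_iff (ne_of_gt (sub_pos.2 h))] at hslope
    have hc0 : 0 < c := lt_trans ha hc.1
    have h2 : b ^ (-α-1) ≤ c ^ (-α-1) :=
      Real.rpow_le_rpow_of_nonpos hc0 hc.2.le (by linarith)
    have h3 : α * b ^ (-α-1) * (b-a) ≤ α * c ^ (-α-1) * (b-a) :=
      mul_le_mul_of_nonneg_right (mul_le_mul_of_nonneg_left h2 hα.le) (sub_pos.2 h).le
    linarith

/-- The core quantitative estimate for part 1. -/
lemma core_est (hd : 1 ≤ d) (hα : 0 < α)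
    (hf0 : ∀ x, 0 ≤ f x) (hfg : ∀ x : Euc d, f x = g ‖x‖) (hg : AntitoneOn g (Ici (0:ℝ)))
    (hint : ∀ x : Euc d, Integrable (fun y : Euc d => ‖x - y‖ ^ (-α) * f y)
      (volume : Measure (Euc d)))
    (N : ℕ) (hN : 1 ≤ N)
    (hr : 0 < r) (hrt : r < t) (ht : t ≤ r + r/100) :
    (t - r) * (α * (3 + 7*(N:ℝ)/4)^(-α-2) * (1/8)^d
        * (volume (ball (0 : Euc d) 1)).toReal
        * ((g (2/3*r) - g ((2/3 + 7*(N:ℝ)/4)*r)) * r ^ ((d:ℝ)-1-α))) ≤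
      rieszConv d α f (r • e) - rieszConv d α f (t • e) := by
  haveI : Nontrivial (Euc d) := by
    refine ⟨⟨0, EuclideanSpace.single (⟨0, hd⟩ : Fin d) (1:ℝ), fun h => ?_⟩⟩
    have := congrArg norm h
    rw [norm_zero, EuclideanSpace.norm_single] at this
    norm_num at this
  set m : ℝ := (r+t)/2 with hmdef
  have hm0 : 0 < m := by rw [hmdef]; linarith
  set C : ℝ := 3 + 7*(N:ℝ)/4 with hCdef
  have hC1 : 1 ≤ C := by
    rw [hCdef]
    have : (0:ℝ) ≤ (N:ℝ) := Nat.cast_nonneg N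
    linarith
  have hC0 : 0 < C := lt_of_lt_of_le one_pos hC1
  set s : ℕ → ℝ := fun k => (2/3 + 7*(k:ℝ)/4)*r with hsdef
  have hs_mono : ∀ k : ℕ, s k + 7*r/4 = s (k+1) := by
    intro k; rw [hsdef]; push_cast; ring
  have hs_lb : ∀ k : ℕ, 2*r/3 ≤ s k := by
    intro k
    rw [hsdef]
    have : (0:ℝ) ≤ (k:ℝ) := Nat.cast_nonneg k
    nlinarith
  have hs_ub : ∀ k : ℕ, k ≤ N → s k ≤ (2/3 + 7*(N:ℝ)/4)*r := by
    intro k hk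
    rw [hsdef]
    have : (k:ℝ) ≤ (N:ℝ) := Nat.cast_le.2 hk
    nlinarith
  set A : ℕ → Set (Euc d) := fun k => ball ((-(s k - r/8)) • e) (r/8) with hAdef
  set W : Euc d → ℝ := fun y =>
    (‖r • e - y‖ ^ (-α) - ‖t • e - y‖ ^ (-α)) * (f y - f (Tm e m y)) with hW
  set H : Set (Euc d) := {y : Euc d | ⟪y, e⟫ < m} with hH
  -- facts about A k
  have hctr_norm : ∀ k : ℕ, ‖(-(s k - r/8)) • e‖ = s k - r/8 := by
    intro k
    have := hs_lb k
    rw [norm_smul, he, mul_one, Real.norm_eq_abs, abs_of_nonpos (by linarith), neg_neg]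
  have hAfacts : ∀ k : ℕ, ∀ y ∈ A k, ‖y‖ ≤ s k ∧ ⟪y, e⟫ ≤ -(s k) + r/4 := by
    intro k y hy
    rw [hAdef, mem_ball, dist_eq_norm] at hy
    set ctr : Euc d := (-(s k - r/8)) • e with hctr
    have hc : ‖ctr‖ = s k - r/8 := hctr_norm k
    have hsum : ctr + (y - ctr) = y := by abel
    constructor
    · calc ‖y‖ = ‖ctr + (y - ctr)‖ := by rw [hsum]
        _ ≤ ‖ctr‖ + ‖y - ctr‖ := norm_add_le _ _
        _ ≤ (s k - r/8) + r/8 := by rw [hc]; linarith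
        _ ≤ s k := by linarith
    · have h1 : ⟪ctr, e⟫ = -(s k - r/8) := by
        rw [hctr, real_inner_smul_left, inner_ee he]; ring
      have h2 : ⟪y - ctr, e⟫ ≤ ‖y - ctr‖ := by
        have := real_inner_le_norm (y - ctr) e; rw [he, mul_one] at this; exact this
      have h3 : ⟪y, e⟫ = ⟪ctr, e⟫ + ⟪y - ctr, e⟫ := by rw [← inner_add_left, hsum]
      rw [h3, h1]
      linarith
  have hAH : ∀ k : ℕ, A k ⊆ H := by
    intro k y hy
    obtain ⟨_, h2⟩ := hAfacts k y hy
    have hlb := hs_lb k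
    show ⟪y, e⟫ < m
    have hlt : -(s k) + r/4 < m := by linarith
    linarith
  -- pointwise lower bound on A k
  have hptwise : ∀ k : ℕ, k < N → ∀ y ∈ A k,
      (α * (C*r)^(-α-1) * ((t-r)/C)) * (g (s k) - g (s (k+1))) ≤ W y := by
    intro k hk y hy
    obtain ⟨h1, h2⟩ := hAfacts k y hy
    have hsk := hs_lb k
    have hskub := hs_ub k (le_of_lt hk)
    set a : ℝ := ‖r • e - y‖ with hadef
    set b : ℝ := ‖t • e - y‖ with hbdef
    have hinner_y : ⟪y, e⟫ ≤ 0 := by linarith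
    have ha_lb : r ≤ a := by
      have hle : ⟪r • e - y, e⟫ ≤ ‖r • e - y‖ := by
        have := real_inner_le_norm (r • e - y) e; rw [he, mul_one] at this; exact this
      have : ⟪r • e - y, e⟫ = r - ⟪y, e⟫ := by
        rw [inner_sub_left, real_inner_smul_left, inner_ee he]; ring
      rw [this] at hle
      rw [hadef]; linarith
    have ha0 : 0 < a := lt_of_lt_of_le hr ha_lb
    have hb_ub : b ≤ C*r := by
      have : b ≤ t + ‖y‖ := by
        rw [hbdef]
        calc ‖t • e - y‖ ≤ ‖t • e‖ + ‖y‖ := norm_sub_le _ _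
          _ = t + ‖y‖ := by
              rw [norm_smul, he, mul_one, Real.norm_eq_abs, abs_of_pos (lt_trans hr hrt)]
      rw [hCdef]
      have hNr : (1:ℝ) ≤ (N:ℝ) := by exact_mod_cast hN
      nlinarith
    have hab : a ≤ b := by
      have e1 := norm_se_sq he r y
      have e2 := norm_se_sq he t y
      nlinarith [norm_nonneg (t • e - y), norm_nonneg (r • e - y)]
    have hb0 : 0 < b := lt_of_lt_of_le ha0 hab
    have hba : (t-r)/C ≤ b - a := by
      have e1 := norm_se_sq he r y
      have e2 := norm_se_sq he t y
      have hsq : (b - a)*(a + b) = (t - r)*(t + r - 2*⟪y,e⟫) := by nlinarith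
      have h5 : (t - r)*(2*r) ≤ (b - a)*(a + b) := by
        rw [hsq]
        have : 2*r ≤ t + r - 2*⟪y,e⟫ := by linarith
        nlinarith
      have h6 : a + b ≤ 2*(C*r) := by nlinarith
      rw [div_le_iff₀ hC0]
      nlinarith [mul_pos hC0 hr, sub_nonneg.2 hab]
    -- kernel difference lower bound
    have hker : α * (C*r)^(-α-1) * ((t-r)/C) ≤ a^(-α) - b^(-α) := by
      have hmvt := rpow_neg_sub_ge (α := α) hα ha0 hab
      have hmono : (C*r)^(-α-1) ≤ b^(-α-1) :=
        Real.rpow_le_rpow_of_nonpos hb0 hb_ub (by linarith)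
      calc α * (C*r)^(-α-1) * ((t-r)/C) ≤ α * b^(-α-1) * (b - a) := by
            apply mul_le_mul
            · exact mul_le_mul_of_nonneg_left hmono hα.le
            · exact hba
            · exact div_nonneg (by linarith) hC0.le
            · positivity
        _ ≤ a^(-α) - b^(-α) := hmvt
    -- f difference lower bound
    have hfd : g (s k) - g (s (k+1)) ≤ f y - f (Tm e m y) := by
      rw [hfg y, hfg (Tm e m y)]
      have hy_ub : g (s k) ≤ g ‖y‖ :=
        hg (mem_Ici.2 (norm_nonneg y)) (mem_Ici.2 (by linarith)) h1
      have hTy_lb : s (k+1) ≤ ‖Tm e m y‖ := by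
        have h5 := Tm_norm_ge' he (m := m) y
        rw [← hs_mono k]
        have : 2*m = r + t := by rw [hmdef]; ring
        linarith
      have hTy : g ‖Tm e m y‖ ≤ g (s (k+1)) := by
        apply hg (mem_Ici.2 ?_) (mem_Ici.2 ?_) hTy_lb
        · rw [← hs_mono k]; linarith
        · exact le_trans (by rw [← hs_mono k]; linarith) hTy_lb
      linarith
    -- combine
    have hgd0 : 0 ≤ g (s k) - g (s (k+1)) := by
      rw [sub_nonneg]
      have hks : s k ≤ s (k+1) := by rw [← hs_mono k]; linarith
      exact hg (mem_Ici.2 (by linarith)) (mem_Ici.2 (by linarith)) hks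
    have hker0 : 0 ≤ α * (C*r)^(-α-1) * ((t-r)/C) :=
      mul_nonneg (by positivity) (div_nonneg (by linarith) hC0.le)
    rw [hW]
    calc (α * (C*r)^(-α-1) * ((t-r)/C)) * (g (s k) - g (s (k+1)))
        ≤ (a^(-α) - b^(-α)) * (f y - f (Tm e m y)) :=
          mul_le_mul hker hfd hgd0 (by linarith)
      _ = (‖r • e - y‖ ^ (-α) - ‖t • e - y‖ ^ (-α)) * (f y - f (Tm e m y)) := by
          rw [hadef, hbdef]
  -- the W function is integrable and a.e. nonneg on H
  have hWi : Integrable W volume := W_integrable hint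
  have hHmeas : MeasurableSet H := measurableSet_H
  have hWnonneg : 0 ≤ᵐ[volume.restrict H] W := by
    haveI : NullSingletonClass (volume : Measure (Euc d)) := by infer_instance
    have hane : ∀ᵐ y : Euc d ∂volume, y ≠ r • e := by
      rw [ae_iff]
      have : {y : Euc d | ¬ y ≠ r • e} = {r • e} := by ext y; simp
      rw [this]
      exact measure_singleton _
    filter_upwards [ae_restrict_mem hHmeas, ae_restrict_of_ae hane] with y hyH hyne
    apply mul_nonneg
    · rw [sub_nonneg]
      have ha : 0 < ‖r • e - y‖ := by
        rw [norm_pos_iff, sub_ne_zero]; exact fun hh => hyne hh.symm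
      have hb : ‖r • e - y‖ ≤ ‖t • e - y‖ := by
        have e1 := norm_se_sq he r y
        have e2 := norm_se_sq he t y
        have hyHm : ⟪y, e⟫ < m := hyH
        nlinarith [norm_nonneg (t • e - y), norm_nonneg (r • e - y)]
      exact Real.rpow_le_rpow_of_nonpos ha hb (by linarith)
    · rw [sub_nonneg, hfg y, hfg (Tm e m y)]
      apply hg (mem_Ici.2 (norm_nonneg _)) (mem_Ici.2 (norm_nonneg _))
      exact Tm_norm_ge he y hm0.le (le_of_lt hyH)
  -- disjointness of the balls
  have hdisj : Set.Pairwise (↑(Finset.range N)) (Function.onFun Disjoint A) := by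
    intro j hj k hk hjk
    have hnorm : (r/8) + (r/8) ≤ dist ((-(s j - r/8)) • e) ((-(s k - r/8)) • e) := by
      rw [dist_eq_norm, ← sub_smul, norm_smul, he, mul_one, Real.norm_eq_abs]
      have : -(s j - r/8) - -(s k - r/8) = s k - s j := by ring
      rw [this, hsdef]
      have habs : |((2/3 + 7*(k:ℝ)/4)*r - (2/3 + 7*(j:ℝ)/4)*r)| = 7*|(k:ℝ)-(j:ℝ)|/4 * r := by
        rw [show (2/3 + 7*(k:ℝ)/4)*r - (2/3 + 7*(j:ℝ)/4)*r = (7*((k:ℝ)-(j:ℝ))/4) * r by ring]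
        rw [abs_mul, abs_of_pos hr]
        congr 1
        rw [abs_div, abs_mul]
        norm_num
      rw [habs]
      have hjk' : j ≠ k := hjk
      have h1abs : (1:ℝ) ≤ |(k:ℝ)-(j:ℝ)| := by
        rcases Nat.lt_or_ge j k with hlt | hge
        · have : (j:ℝ) + 1 ≤ (k:ℝ) := by exact_mod_cast hlt
          rw [abs_of_nonneg (by linarith)]; linarith
        · have hkj : k < j := lt_of_le_of_ne hge (Ne.symm hjk')
          have : (k:ℝ) + 1 ≤ (j:ℝ) := by exact_mod_cast hkj
          rw [abs_of_nonpos (by linarith)]; linarith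
      nlinarith
    exact ball_disjoint_ball hnorm
  -- assembling
  have hVol : ∀ k : ℕ, (volume (A k)).toReal = (r/8)^d * (volume (ball (0 : Euc d) 1)).toReal := by
    intro k
    rw [hAdef]
    rw [Measure.addHaar_ball _ _ (by positivity : (0:ℝ) ≤ r/8)]
    rw [ENNReal.toReal_mul, ENNReal.toReal_ofReal (by positivity)]
    congr 2
    exact finrank_euclideanSpace_fin
  have hAint : ∀ k : ℕ, IntegrableOn W (A k) volume := fun k => hWi.integrableOn
  have hAk_bound : ∀ k ∈ Finset.range N,
      (α * (C*r)^(-α-1) * ((t-r)/C)) * (g (s k) - g (s (k+1))) * ((r/8)^d * (volume (ball (0 : Euc d) 1)).toReal)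
        ≤ ∫ y in A k, W y := by
    intro k hk
    rw [← hVol k]
    have h := setIntegral_ge_of_const_le measurableSet_ball measure_ball_lt_top.ne
      (fun y hy => hptwise k (Finset.mem_range.1 hk) y hy) (hAint k)
    rw [measureReal_def, smul_eq_mul, mul_comm] at h
    exact h
  have hUnionH : (⋃ k ∈ Finset.range N, A k) ⊆ H := by
    intro y hy
    simp only [mem_iUnion] at hy
    obtain ⟨k, _, hk⟩ := hy
    exact hAH k hk
  have hsum_eq : ∫ y in ⋃ k ∈ Finset.range N, A k, W y = ∑ k ∈ Finset.range N, ∫ y in A k, W y :=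
    integral_biUnion_finset (Finset.range N) (fun k _ => measurableSet_ball) hdisj
      (fun k _ => hAint k)
  have hHbound : ∫ y in ⋃ k ∈ Finset.range N, A k, W y ≤ ∫ y in H, W y := by
    apply setIntegral_mono_set hWi.integrableOn hWnonneg
    exact HasSubset.Subset.eventuallyLE hUnionH
  have htele : ∑ k ∈ Finset.range N,
      (α * (C*r)^(-α-1) * ((t-r)/C)) * (g (s k) - g (s (k+1))) * ((r/8)^d * (volume (ball (0 : Euc d) 1)).toReal)
      = (α * (C*r)^(-α-1) * ((t-r)/C)) * (g (s 0) - g (s N)) * ((r/8)^d * (volume (ball (0 : Euc d) 1)).toReal) := by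
    rw [← Finset.sum_mul, ← Finset.mul_sum]
    congr 2
    exact Finset.sum_range_sub' (fun k => g (s k)) N
  have hsum_ge : (α * (C*r)^(-α-1) * ((t-r)/C)) * (g (s 0) - g (s N)) * ((r/8)^d * (volume (ball (0 : Euc d) 1)).toReal)
      ≤ ∫ y in H, W y := by
    rw [← htele]
    calc ∑ k ∈ Finset.range N, (α * (C*r)^(-α-1) * ((t-r)/C)) * (g (s k) - g (s (k+1))) * ((r/8)^d * (volume (ball (0 : Euc d) 1)).toReal)
        ≤ ∑ k ∈ Finset.range N, ∫ y in A k, W y := Finset.sum_le_sum hAk_bound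
      _ = ∫ y in ⋃ k ∈ Finset.range N, A k, W y := hsum_eq.symm
      _ ≤ ∫ y in H, W y := hHbound
  rw [S6.diff_eq he hα hint hrt]
  refine le_trans ?_ hsum_ge
  -- algebra: rewrite the constant
  have hs0 : s 0 = 2/3*r := by rw [hsdef]; push_cast; ring
  have hsN : s N = (2/3 + 7*(N:ℝ)/4)*r := by rw [hsdef]
  rw [hs0, hsN]
  have hrpow : (C*r)^(-α-1) = C^(-α-1) * r^(-α-1) := Real.mul_rpow hC0.le hr.le
  have hr8 : ((r:ℝ)/8)^d = (1/8)^d * r^(d:ℕ) := by rw [div_pow, one_div, inv_pow, div_eq_mul_inv, mul_comm]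
  have hrd : (r:ℝ)^(d:ℕ) = r ^ ((d:ℝ)) := (Real.rpow_natCast r d).symm
  have hrcomb : r^(-α-1) * r^((d:ℝ)) = r^((d:ℝ)-1-α) := by
    rw [← Real.rpow_add hr]
    congr 1; ring
  have hCpow : C^(-α-1) * (1/C) = C^(-α-2) := by
    rw [one_div, ← Real.rpow_neg_one C, ← Real.rpow_add hC0]
    congr 1; ring
  have hΔ0 : 0 ≤ g (2/3*r) - g ((2/3 + 7*(N:ℝ)/4)*r) := by
    rw [sub_nonneg]
    apply hg (mem_Ici.2 (by positivity)) (mem_Ici.2 (by positivity))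
    have : (1:ℝ) ≤ (N:ℝ) := by exact_mod_cast hN
    nlinarith
  apply le_of_eq
  rw [hrpow, hr8, hrd, ← hrcomb, ← hCpow]
  have hCne : C ≠ 0 := hC0.ne'
  field_simp

omit he in
lemma part1 (hd : 1 ≤ d) (K : Set (ℝ × ℝ)) (hK : IsCompact K)
    (hKsub : K ⊆ Ioo (0 : ℝ) (d : ℝ) ×ˢ Ioc (0 : ℝ) (1 / 4 : ℝ)) :
    ∃ c : ℝ, 0 < c ∧
      ∀ α ε₀ : ℝ, (α, ε₀) ∈ K →
        ∀ f : Euc d → ℝ, ∀ g : ℝ → ℝ,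
          ContDiff ℝ 1 f → (∀ x, 0 ≤ f x) → (∀ x : Euc d, f x = g ‖x‖) →
          AntitoneOn g (Ici (0 : ℝ)) →
          (∀ x : Euc d, Integrable (fun y : Euc d => ‖x - y‖ ^ (-α) * f y)
            (volume : Measure (Euc d))) →
          ∀ e : Euc d, ‖e‖ = 1 →
            ∀ r : ℝ, 0 < r → ∀ D : ℝ,
              HasDerivAt (fun t : ℝ => rieszConv d α f (t • e)) D r →
                c * ((g (2 / 3 * r) - g (r / (2 * ε₀))) * r ^ ((d : ℝ) - 1 - α)) ≤ -D := by
  rcases K.eq_empty_or_nonempty with rfl | hKne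
  · exact ⟨1, one_pos, fun α ε₀ hmem => absurd hmem (notMem_empty _)⟩
  obtain ⟨pa, hpaK, hpamin⟩ := hK.exists_isMinOn hKne continuous_fst.continuousOn
  obtain ⟨pb, hpbK, hpbmax⟩ := hK.exists_isMaxOn hKne continuous_fst.continuousOn
  obtain ⟨pc, hpcK, hpcmin⟩ := hK.exists_isMinOn hKne continuous_snd.continuousOn
  set α₀ : ℝ := pa.1 with hα₀
  set α₁ : ℝ := pb.1 with hα₁
  set ε₁ : ℝ := pc.2 with hε₁
  have hα₀pos : 0 < α₀ := (hKsub hpaK).1.1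
  have hε₁pos : 0 < ε₁ := (hKsub hpcK).2.1
  set N : ℕ := max ⌈1/ε₁⌉₊ 1 with hN
  have hN1 : 1 ≤ N := le_max_right _ _
  have hNε : 1/ε₁ ≤ (N:ℝ) := le_trans (Nat.le_ceil _) (by exact_mod_cast le_max_left _ _)
  set C : ℝ := 3 + 7*(N:ℝ)/4 with hCdef
  have hC1 : 1 ≤ C := by
    have : (0:ℝ) ≤ (N:ℝ) := Nat.cast_nonneg N
    rw [hCdef]; linarith
  have hC0 : 0 < C := lt_of_lt_of_le one_pos hC1
  set V1 : ℝ := (volume (ball (0 : Euc d) 1)).toReal with hV1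
  have hV1pos : 0 < V1 := by
    rw [hV1]
    exact ENNReal.toReal_pos (measure_ball_pos _ _ one_pos).ne' measure_ball_lt_top.ne
  refine ⟨α₀ * C^(-α₁-2) * (1/8)^d * V1, by positivity, ?_⟩
  intro α ε₀ hmem f g hf hf0 hfg hg hint e he r hr D hD
  have hα : 0 < α := (hKsub hmem).1.1
  have hα₀α : α₀ ≤ α := hpamin hmem
  have hαα₁ : α ≤ α₁ := hpbmax hmem
  have hε₁ε : ε₁ ≤ ε₀ := hpcmin hmem
  have hε₀ : 0 < ε₀ := (hKsub hmem).2.1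
  have hε₀le : ε₀ ≤ 1/4 := (hKsub hmem).2.2
  set rp : ℝ := r ^ ((d:ℝ)-1-α) with hrp
  have hrp0 : 0 ≤ rp := le_of_lt (Real.rpow_pos_of_pos hr _)
  set Δ : ℝ := g (2/3*r) - g (r/(2*ε₀)) with hΔ
  set ΔN : ℝ := g (2/3*r) - g ((2/3 + 7*(N:ℝ)/4)*r) with hΔN
  have hΔ0 : 0 ≤ Δ := by
    rw [hΔ, sub_nonneg]
    apply hg (mem_Ici.2 (by positivity)) (mem_Ici.2 (by positivity))
    rw [le_div_iff₀ (by positivity : (0:ℝ) < 2*ε₀)]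
    nlinarith
  have hΔΔN : Δ ≤ ΔN := by
    rw [hΔ, hΔN]
    have : g ((2/3 + 7*(N:ℝ)/4)*r) ≤ g (r/(2*ε₀)) := by
      apply hg (mem_Ici.2 (by positivity)) (mem_Ici.2 (by positivity))
      have hNε₀ : 1 ≤ (N:ℝ)*ε₀ := by
        have h1 : 1 ≤ (N:ℝ)*ε₁ := (div_le_iff₀ hε₁pos).1 hNε
        have h2 : (N:ℝ)*ε₁ ≤ (N:ℝ)*ε₀ := mul_le_mul_of_nonneg_left hε₁ε (Nat.cast_nonneg N)
        linarith
      rw [div_le_iff₀ (by positivity : (0:ℝ) < 2*ε₀)]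
      have hN0 : (0:ℝ) ≤ (N:ℝ) := Nat.cast_nonneg N
      nlinarith [mul_le_mul_of_nonneg_right hNε₀ hr.le,
        mul_nonneg (mul_nonneg hN0 hε₀.le) hr.le, mul_nonneg hε₀.le hr.le]
    linarith
  -- per instance constant comparison
  have hcc : α₀ * C^(-α₁-2) * (1/8)^d * V1 ≤ α * C^(-α-2) * (1/8)^d * V1 := by
    have h1 : C^(-α₁-2) ≤ C^(-α-2) :=
      Real.rpow_le_rpow_of_exponent_le hC1 (by linarith)
    have h2 : α₀ * C^(-α₁-2) ≤ α * C^(-α-2) := by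
      apply mul_le_mul hα₀α h1 (le_of_lt (Real.rpow_pos_of_pos hC0 _)) hα.le
    apply mul_le_mul_of_nonneg_right (mul_le_mul_of_nonneg_right h2 (by positivity)) hV1pos.le
  set c : ℝ := α₀ * C^(-α₁-2) * (1/8)^d * V1 with hc
  set B : ℝ := c * (Δ * rp) with hB
  -- slope bound
  have hslope : ∀ t' : ℝ, t' ∈ Ioo r (r + r/100) →
      (rieszConv d α f (t' • e) - rieszConv d α f (r • e)) / (t' - r) ≤ -B := by
    intro t' ht'
    obtain ⟨ht1, ht2⟩ := ht'
    have hcore := core_est he hd hα hf0 hfg hg hint N hN1 hr ht1 (le_of_lt ht2)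
    have hBle : B ≤ α * C^(-α-2) * (1/8)^d * V1 * (ΔN * rp) := by
      rw [hB]
      have hΔrp : Δ * rp ≤ ΔN * rp := mul_le_mul_of_nonneg_right hΔΔN hrp0
      calc c * (Δ * rp) ≤ (α * C^(-α-2) * (1/8)^d * V1) * (Δ * rp) :=
            mul_le_mul_of_nonneg_right hcc (mul_nonneg hΔ0 hrp0)
        _ ≤ (α * C^(-α-2) * (1/8)^d * V1) * (ΔN * rp) := by
            apply mul_le_mul_of_nonneg_left hΔrp (by positivity)
    have hmain : (t' - r) * B ≤ rieszConv d α f (r • e) - rieszConv d α f (t' • e) := by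
      refine le_trans ?_ hcore
      exact mul_le_mul_of_nonneg_left hBle (by linarith)
    rw [div_le_iff₀ (by linarith : (0:ℝ) < t' - r)]
    nlinarith
  -- pass to the limit
  have htendsto : Tendsto (slope (fun t : ℝ => rieszConv d α f (t • e)) r)
      (𝓝[>] r) (𝓝 D) := by
    have := hasDerivAt_iff_tendsto_slope.1 hD
    exact this.mono_left (nhdsWithin_mono r (fun x hx => ne_of_gt hx))
  have hev : ∀ᶠ t' in 𝓝[>] r,
      slope (fun t : ℝ => rieszConv d α f (t • e)) r t' ≤ -B := by
    filter_upwards [Ioo_mem_nhdsGT_of_mem (⟨le_refl r, by linarith⟩ : r ∈ Ico r (r + r/100))] with t' ht'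
    rw [slope_def_field]
    exact hslope t' ht'
  have hD_le : D ≤ -B := le_of_tendsto htendsto hev
  rw [hB] at hD_le
  linarith


end S6

namespace S6
namespace S6b
open S6
variable {d : ℕ} {e : Euc d} {α : ℝ} {f : Euc d → ℝ} {g : ℝ → ℝ}

lemma nontrivial_euc (hd : 1 ≤ d) : Nontrivial (Euc d) := by
  refine ⟨⟨0, EuclideanSpace.single (⟨0, hd⟩ : Fin d) (1:ℝ), fun h => ?_⟩⟩
  have := congrArg norm h
  rw [norm_zero, EuclideanSpace.norm_single] at this
  norm_num at this

lemma ae_ne_pt (hd : 1 ≤ d) (c : Euc d) : ∀ᵐ y : Euc d ∂volume, y ≠ c := by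
  haveI := nontrivial_euc hd
  rw [ae_iff]
  have : {y : Euc d | ¬ y ≠ c} = {c} := by ext y; simp
  rw [this]
  exact measure_singleton c

/-- rotation invariance -/
lemma rieszConv_radial (hfg : ∀ x : Euc d, f x = g ‖x‖) {x z : Euc d} (hxz : ‖x‖ = ‖z‖) :
    rieszConv d α f x = rieszConv d α f z := by
  rcases eq_or_ne x z with rfl | hne
  · rfl
  · set Q : Euc d ≃ₗᵢ[ℝ] Euc d := Submodule.reflection (ℝ ∙ (x - z))ᗮ with hQdef
    have hQ : Q x = z := Submodule.reflection_sub hxz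
    have hmp : MeasurePreserving (Q : Euc d → Euc d) volume volume := Q.measurePreserving
    have : rieszConv d α f z = ∫ y : Euc d, ‖z - Q y‖ ^ (-α) * f (Q y) :=
      (hmp.integral_comp Q.toHomeomorph.measurableEmbedding _).symm
    rw [rieszConv, this]
    congr 1; ext y
    rw [← hQ, ← Q.map_sub, Q.norm_map, hfg (Q y), Q.norm_map, ← hfg y]

/-- strict decrease -/
lemma strict_lt (hd : 1 ≤ d) (hα : 0 < α) (hf : Continuous f) (hf0 : ∀ x, 0 ≤ f x)
    (hfg : ∀ x : Euc d, f x = g ‖x‖) (hg : AntitoneOn g (Ici (0:ℝ)))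
    (hint : ∀ x : Euc d, Integrable (fun y : Euc d => ‖x - y‖ ^ (-α) * f y)
      (volume : Measure (Euc d)))
    (hgtop : Tendsto g atTop (nhds 0)) (hx0 : ∃ x, f x ≠ 0)
    (he : ‖e‖ = 1) {r t : ℝ} (hr : 0 ≤ r) (hrt : r < t) :
    rieszConv d α f (t • e) < rieszConv d α f (r • e) := by
  set m : ℝ := (r+t)/2 with hmdef
  have hm0 : 0 < m := by rw [hmdef]; linarith
  set h : ℝ := m/4 with hhdef
  have hh0 : 0 < h := by positivity
  -- a positive value of g at a positive radius
  obtain ⟨x₀, hx₀⟩ := hx0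
  have hfx₀ : 0 < f x₀ := lt_of_le_of_ne (hf0 x₀) (Ne.symm hx₀)
  have hgs : ∀ s : ℝ, 0 ≤ s → g s = f (s • e) := by
    intro s hs
    rw [hfg (s • e), norm_smul, he, mul_one, Real.norm_eq_abs, abs_of_nonneg hs]
  obtain ⟨s₀, hs₀pos, hgs₀⟩ : ∃ s₀ : ℝ, 0 < s₀ ∧ 0 < g s₀ := by
    have hφ : Continuous fun u : ℝ => f (u • e) := hf.comp (continuous_id.smul continuous_const)
    have h0 : 0 < f (‖x₀‖ • e) := by rw [← hgs _ (norm_nonneg x₀), ← hfg x₀]; exact hfx₀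
    have := (hφ.tendsto ‖x₀‖).eventually (lt_mem_nhds h0)
    rw [Metric.eventually_nhds_iff] at this
    obtain ⟨ε, hε, hball⟩ := this
    refine ⟨‖x₀‖ + ε/2, by positivity, ?_⟩
    rw [hgs _ (by positivity)]
    apply hball
    have harith : ‖x₀‖ + ε/2 - ‖x₀‖ = ε/2 := by ring
    rw [Real.dist_eq, harith, abs_of_pos (by positivity)]
    linarith
  -- a strict drop of g over gap h at some radius ρ ≥ s₀
  obtain ⟨ρ, hρs, hdrop⟩ : ∃ ρ : ℝ, s₀ ≤ ρ ∧ g (ρ + h) < g ρ := by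
    by_contra hcon
    push_neg at hcon
    have heq : ∀ ρ : ℝ, s₀ ≤ ρ → g (ρ + h) = g ρ := by
      intro ρ hρ
      refine le_antisymm (hg ?_ ?_ (by linarith)) (hcon ρ hρ)
      · exact mem_Ici.2 (by linarith)
      · exact mem_Ici.2 (by linarith)
    have hiter : ∀ n : ℕ, g (s₀ + n * h) = g s₀ := by
      intro n
      induction n with
      | zero => simp
      | succ k ih =>
        have : s₀ + (k+1 : ℕ) * h = (s₀ + k * h) + h := by push_cast; ring
        have hk : s₀ ≤ s₀ + k * h := by
          have : (0:ℝ) ≤ (k:ℝ) * h := by positivity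
          linarith
        rw [this, heq _ hk, ih]
    have htend : Tendsto (fun n : ℕ => g (s₀ + n * h)) atTop (nhds 0) := by
      apply hgtop.comp
      apply tendsto_atTop_add_const_left
      exact Tendsto.atTop_mul_const hh0 tendsto_natCast_atTop_atTop
    rw [show (fun n : ℕ => g (s₀ + n * h)) = fun _ => g s₀ from funext hiter] at htend
    have := tendsto_nhds_unique htend tendsto_const_nhds
    linarith
  have hρ0 : 0 < ρ := lt_of_lt_of_le hs₀pos hρs
  set δ : ℝ := min ρ h / 2 with hδdef
  have hδ0 : 0 < δ := by rw [hδdef]; positivity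
  have hδρ : 2 * δ ≤ ρ := by rw [hδdef]; have := min_le_left ρ h; linarith
  have hδh : 2 * δ ≤ h := by rw [hδdef]; have := min_le_right ρ h; linarith
  set ctr : Euc d := (-(ρ - δ)) • e with hctr
  set A : Set (Euc d) := ball ctr δ with hA
  -- facts about points of A
  have hAfacts : ∀ y ∈ A, ‖y‖ ≤ ρ ∧ ⟪y, e⟫ < -ρ + 2*δ := by
    intro y hy
    rw [hA, mem_ball, dist_eq_norm] at hy
    have hc : ‖ctr‖ = ρ - δ := by
      rw [hctr, norm_smul, he, mul_one, Real.norm_eq_abs,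
        abs_of_nonpos (by linarith), neg_neg]
    constructor
    · have hsum : ctr + (y - ctr) = y := by abel
      calc ‖y‖ = ‖ctr + (y - ctr)‖ := by rw [hsum]
        _ ≤ ‖ctr‖ + ‖y - ctr‖ := norm_add_le _ _
        _ ≤ (ρ - δ) + δ := by rw [hc]; linarith
        _ = ρ := by ring
    · have h1 : ⟪ctr, e⟫ = -(ρ - δ) := by
        rw [hctr, real_inner_smul_left, inner_ee he]; ring
      have h2 : ⟪y - ctr, e⟫ ≤ ‖y - ctr‖ := by
        have := real_inner_le_norm (y - ctr) e; rw [he, mul_one] at this; exact this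
      have hsum : ctr + (y - ctr) = y := by abel
      have : ⟪y, e⟫ = ⟪ctr, e⟫ + ⟪y - ctr, e⟫ := by rw [← inner_add_left, hsum]
      rw [this, h1]
      linarith
  have hAH : A ⊆ {y : Euc d | ⟪y, e⟫ < m} := by
    intro y hy
    obtain ⟨_, h2⟩ := hAfacts y hy
    have : -ρ + 2*δ ≤ h := by linarith
    exact lt_of_lt_of_le (lt_of_lt_of_le h2 this) (by rw [hhdef]; linarith)
  -- positivity of the integrand on A
  set W : Euc d → ℝ := fun y =>
    (‖r • e - y‖ ^ (-α) - ‖t • e - y‖ ^ (-α)) * (f y - f (Tm e m y)) with hW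
  have hWpos : ∀ y ∈ A, 0 < W y := by
    intro y hy
    obtain ⟨h1, h2⟩ := hAfacts y hy
    have hyH : ⟪y, e⟫ < m := hAH hy
    have hyne : y ≠ r • e := by
      intro hcontra
      rw [hcontra, real_inner_smul_left, inner_ee he, mul_one] at h2
      linarith
    apply _root_.mul_pos
    · rw [sub_pos]
      have ha : 0 < ‖r • e - y‖ := by
        rw [norm_pos_iff, sub_ne_zero]; exact fun hh => hyne hh.symm
      have hb : ‖r • e - y‖ < ‖t • e - y‖ := by
        have e1 := norm_se_sq he r y
        have e2 := norm_se_sq he t y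
        nlinarith [norm_nonneg (t • e - y)]
      exact Real.rpow_lt_rpow_of_neg ha hb (by linarith)
    · rw [sub_pos, hfg y, hfg (Tm e m y)]
      have hTy : ρ + h ≤ ‖Tm e m y‖ := by
        have h5 := Tm_norm_ge' he (m := m) y
        have hm4 : h = m/4 := hhdef
        linarith
      calc g ‖Tm e m y‖ ≤ g (ρ + h) := by
            apply hg (mem_Ici.2 (by linarith)) (mem_Ici.2 (by linarith)) hTy
        _ < g ρ := hdrop
        _ ≤ g ‖y‖ := hg (mem_Ici.2 (norm_nonneg y)) (mem_Ici.2 hρ0.le) h1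
  -- nonnegativity a.e. on H
  set H : Set (Euc d) := {y : Euc d | ⟪y, e⟫ < m} with hH
  have hHm : MeasurableSet H := measurableSet_H
  have hWnonneg : 0 ≤ᵐ[volume.restrict H] W := by
    filter_upwards [ae_restrict_mem hHm, ae_restrict_of_ae (ae_ne_pt hd (r • e))] with y hyH hyne
    apply mul_nonneg
    · rw [sub_nonneg]
      exact kernel_mono he hα hrt hyH hyne
    · rw [sub_nonneg, hfg y, hfg (Tm e m y)]
      apply hg (mem_Ici.2 (norm_nonneg _)) (mem_Ici.2 (norm_nonneg _))
      exact Tm_norm_ge he y hm0.le (le_of_lt hyH)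
  -- integrability of W on H
  have hdiff := S6.diff_eq (f := f) he hα hint hrt
  have hWint : IntegrableOn W H volume := by
    have hkr : Integrable (fun y : Euc d => ‖r • e - y‖ ^ (-α) * f y) volume := hint _
    have hkt : Integrable (fun y : Euc d => ‖t • e - y‖ ^ (-α) * f y) volume := hint _
    have hT := Tm_measurePreserving (d := d) (e := e) (m := m)
    have hTe := Tm_measurableEmbedding (d := d) (e := e) (m := m)
    have h3 : Integrable ((fun y : Euc d => ‖r • e - y‖ ^ (-α) * f y) ∘ (Tm e m)) volume :=
      (hT.integrable_comp_emb hTe).2 hkr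
    have h4 : Integrable ((fun y : Euc d => ‖t • e - y‖ ^ (-α) * f y) ∘ (Tm e m)) volume :=
      (hT.integrable_comp_emb hTe).2 hkt
    have hdr : ∀ y, ‖r • e - Tm e m y‖ = ‖t • e - y‖ := by
      intro y; rw [Tm_dist]; congr 2; rw [hmdef]; ring
    have hdt : ∀ y, ‖t • e - Tm e m y‖ = ‖r • e - y‖ := by
      intro y; rw [Tm_dist]; congr 2; rw [hmdef]; ring
    have : Integrable W volume := by
      have := ((hkr.sub hkt).add (h3.sub h4))
      refine this.congr (Filter.Eventually.of_forall fun y => ?_)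
      simp only [hW, Function.comp_apply, Pi.sub_apply, Pi.add_apply]
      rw [hdr y, hdt y]
      ring
    exact this.integrableOn
  -- conclusion
  have hApos : 0 < ∫ y in A, W y := by
    rw [setIntegral_pos_iff_support_of_nonneg_ae]
    · have hsub : A ⊆ Function.support W ∩ A := by
        intro y hy; exact ⟨fun h0 => (hWpos y hy).ne' h0, hy⟩
      calc (0:ℝ≥0∞) < volume A := by
              rw [hA]; exact measure_ball_pos _ _ hδ0
        _ ≤ volume (Function.support W ∩ A) := measure_mono hsub
    · filter_upwards [ae_restrict_mem measurableSet_ball] with y hy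
      exact (hWpos y hy).le
    · exact hWint.mono_set hAH
  have hHA : ∫ y in A, W y ≤ ∫ y in H, W y := by
    apply setIntegral_mono_set hWint hWnonneg
    exact HasSubset.Subset.eventuallyLE hAH
  have : 0 < rieszConv d α f (r • e) - rieszConv d α f (t • e) := by
    rw [hdiff]
    exact lt_of_lt_of_le hApos hHA
  linarith

end S6b
end S6

theorem stmt6 (d : ℕ) (hd : 1 ≤ d) :
    -- main part: lower bound on the (negative) radial derivative, uniformly for
    -- (α, ε₀) in a compact subset of (0, d) × (0, 1/4]
    (∀ K : Set (ℝ × ℝ), IsCompact K → K ⊆ Ioo (0 : ℝ) (d : ℝ) ×ˢ Ioc (0 : ℝ) (1 / 4 : ℝ) →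
      ∃ c : ℝ, 0 < c ∧
        ∀ α ε₀ : ℝ, (α, ε₀) ∈ K →
          ∀ f : Euc d → ℝ, ∀ g : ℝ → ℝ,
            ContDiff ℝ 1 f → (∀ x, 0 ≤ f x) → (∀ x : Euc d, f x = g ‖x‖) →
            AntitoneOn g (Ici (0 : ℝ)) →
            (∀ x : Euc d, Integrable (fun y : Euc d => ‖x - y‖ ^ (-α) * f y)
              (volume : Measure (Euc d))) →
            ∀ e : Euc d, ‖e‖ = 1 →
              ∀ r : ℝ, 0 < r → ∀ D : ℝ,
                HasDerivAt (fun t : ℝ => rieszConv d α f (t • e)) D r →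
                  c * ((g (2 / 3 * r) - g (r / (2 * ε₀))) * r ^ ((d : ℝ) - 1 - α)) ≤ -D) ∧
    -- in particular: if f vanishes at infinity and is nontrivial, the Riesz potential
    -- is strictly radially decreasing
    (∀ α : ℝ, α ∈ Ioo (0 : ℝ) (d : ℝ) →
      ∀ f : Euc d → ℝ, ∀ g : ℝ → ℝ,
        ContDiff ℝ 1 f → (∀ x, 0 ≤ f x) → (∀ x : Euc d, f x = g ‖x‖) →
        AntitoneOn g (Ici (0 : ℝ)) →
        (∀ x : Euc d, Integrable (fun y : Euc d => ‖x - y‖ ^ (-α) * f y)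
          (volume : Measure (Euc d))) →
        Tendsto g atTop (nhds 0) → (∃ x, f x ≠ 0) →
          ∀ x y : Euc d, ‖x‖ < ‖y‖ → rieszConv d α f y < rieszConv d α f x) := by
  constructor
  · intro K hK hKsub
    exact S6.part1 hd K hK hKsub
  · intro α hα f g hf hf0 hfg hg hint hgtop hx0 x y hxy
    set e : Euc d := EuclideanSpace.single (⟨0, hd⟩ : Fin d) (1:ℝ) with he'
    have he : ‖e‖ = 1 := by rw [he', EuclideanSpace.norm_single]; norm_num
    have hnx : ‖(‖x‖ • e)‖ = ‖x‖ := by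
      rw [norm_smul, he, mul_one, Real.norm_eq_abs, abs_of_nonneg (norm_nonneg x)]
    have hny : ‖(‖y‖ • e)‖ = ‖y‖ := by
      rw [norm_smul, he, mul_one, Real.norm_eq_abs, abs_of_nonneg (norm_nonneg y)]
    have h1 : rieszConv d α f x = rieszConv d α f (‖x‖ • e) :=
      S6.S6b.rieszConv_radial hfg hnx.symm
    have h2 : rieszConv d α f y = rieszConv d α f (‖y‖ • e) :=
      S6.S6b.rieszConv_radial hfg hny.symm
    rw [h1, h2]
    exact S6.S6b.strict_lt hd hα.1 hf.continuous hf0 hfg hg hint hgtop hx0 he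
      (norm_nonneg x) hxy
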